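/- Let k ≥ 6, let L be the set of ((k−2)/(k−3))⁺-A-free words over Fin k, and let L₁, L₂, L₃ be the subsets of L defined by: L₁ = words in L with prefix [0,1,…,k−3] having no factor of length k−1 with pairwise distinct letters; L₂ = words in L with prefix [0,1,…,k−2] having no factor of length k with pairwise distinct letters; L₃ = words in L with prefix [0,1,…,k−1]. Assume L₁, L₂, L₃ are nonempty and finite, and let ℓ₁, ℓ₂, ℓ₃ be the maximum lengths of words in L₁, L₂, L₃ respectively. Then every word w ∈ L satisfies |w| ≤ ℓ₁ + ℓ₂ + ℓ₃ + 4 − 2k. -/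

import Mathlib

/-- `x` is a factor (contiguous subword) of `w`. -/
def IsFactor {A : Type*} (x w : List A) : Prop := ∃ p s, w = p ++ x ++ s

/-- `w` is a strong Abelian `β`-power: `w = u₁ ++ u₂ ++ ⋯ ++ u_k ++ u'` where
`k = ⌊β⌋`, `u₁ ≠ []`, all `uᵢ` are Abelian equivalent (permutations of each other),
`u'` is Abelian equivalent to the prefix of `u₁` of length `|u'| < |u₁|`,
and `|w| = β·|u₁|`. -/
def IsStrongAPower {A : Type*} (β : ℚ) (w : List A) : Prop :=
  ∃ (u₁ : List A) (us : List (List A)) (u' : List A),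
    u₁ ≠ [] ∧
    ((us.length : ℤ) + 1 = ⌊β⌋) ∧
    (∀ u ∈ us, u.Perm u₁) ∧
    u'.length < u₁.length ∧
    u'.Perm (u₁.take u'.length) ∧
    w = (u₁ :: us).flatten ++ u' ∧
    ((w.length : ℚ) = β * u₁.length)

/-- `w` is `β`-A-free: no factor of `w` is a strong Abelian `γ`-power for a rational `γ ≥ β`. -/
def AFree {A : Type*} (β : ℚ) (w : List A) : Prop :=
  ∀ x, IsFactor x w → ∀ γ : ℚ, β ≤ γ → ¬ IsStrongAPower γ x

/-- `w` is `β⁺`-A-free: no factor of `w` is a strong Abelian `γ`-power for a rational `γ > β`. -/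
def APlusFree {A : Type*} (β : ℚ) (w : List A) : Prop :=
  ∀ x, IsFactor x w → ∀ γ : ℚ, β < γ → ¬ IsStrongAPower γ x

lemma IsFactor.trans {A : Type*} {x y w : List A} (h1 : IsFactor x y) (h2 : IsFactor y w) :
    IsFactor x w := by
  obtain ⟨p, s, rfl⟩ := h1
  obtain ⟨p', s', rfl⟩ := h2
  exact ⟨p' ++ p, s ++ s', by simp⟩

lemma IsFactor.refl {A : Type*} (w : List A) : IsFactor w w := ⟨[], [], by simp⟩

lemma isFactor_take {A : Type*} (w : List A) (n : ℕ) : IsFactor (w.take n) w :=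
  ⟨[], w.drop n, by simp⟩

lemma isFactor_drop {A : Type*} (w : List A) (n : ℕ) : IsFactor (w.drop n) w :=
  ⟨w.take n, [], by simp⟩

lemma IsFactor.length_le {A : Type*} {x w : List A} (h : IsFactor x w) : x.length ≤ w.length := by
  obtain ⟨p, s, rfl⟩ := h; simp; omega

lemma APlusFree.factor {A : Type*} {β : ℚ} {w v : List A} (h : APlusFree β w)
    (hv : IsFactor v w) : APlusFree β v :=
  fun x hx γ hγ => h x (hx.trans hv) γ hγ

lemma IsStrongAPower.map {A B : Type*} {γ : ℚ} {x : List A} (f : A → B)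
    (h : IsStrongAPower γ x) : IsStrongAPower γ (x.map f) := by
  obtain ⟨u₁, us, u', hne, hfl, hperm, hlt, hp2, heq, hlen⟩ := h
  refine ⟨u₁.map f, us.map (List.map f), u'.map f, by simpa using hne, by simpa using hfl,
    ?_, by simpa using hlt, ?_, ?_, by simpa using hlen⟩
  · intro u hu
    simp only [List.mem_map] at hu
    obtain ⟨u₀, hu₀, rfl⟩ := hu
    exact (hperm u₀ hu₀).map f
  · simpa [← List.map_take] using hp2.map f
  · simp [heq, List.map_append, List.map_flatten]

lemma IsFactor.map {A B : Type*} {x w : List A} (f : A → B) (h : IsFactor x w) :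
    IsFactor (x.map f) (w.map f) := by
  obtain ⟨p, s, rfl⟩ := h
  exact ⟨p.map f, s.map f, by simp⟩

lemma APlusFree.map_equiv {A B : Type*} {β : ℚ} {w : List A} (σ : A ≃ B)
    (h : APlusFree β w) : APlusFree β (w.map σ) := by
  intro x hx γ hγ hpow
  have hx' : IsFactor (x.map σ.symm) w := by
    have := hx.map σ.symm
    simpa using this
  exact h _ hx' γ hγ (hpow.map σ.symm)
lemma exists_perm_map_eq {k m : ℕ} (hm : m ≤ k) (x : List (Fin k)) (hx : x.Nodup)
    (hlen : x.length = m) : ∃ σ : Equiv.Perm (Fin k), x.map σ = (List.finRange k).take m := by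
  classical
  set l : List (Fin k) := x ++ (List.finRange k).filter (fun a => a ∉ x) with hl
  have hlnd : l.Nodup := by
    refine List.Nodup.append hx ((List.nodup_finRange k).filter _) ?_
    intro a ha ha'
    have := List.of_mem_filter ha'
    simp at this
    exact this ha
  have hlmem : ∀ a : Fin k, a ∈ l := by
    intro a
    by_cases h : a ∈ x
    · exact List.mem_append_left _ h
    · exact List.mem_append_right _ (List.mem_filter.2 ⟨List.mem_finRange a, by simp [h]⟩)
  have hllen : l.length = k := by
    have h1 : l.length ≤ (List.finRange k).length :=
      (hlnd.subperm (fun a _ => List.mem_finRange a)).length_le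
    have h2 : (List.finRange k).length ≤ l.length :=
      ((List.nodup_finRange k).subperm (fun a _ => hlmem a)).length_le
    simp only [List.length_finRange] at h1 h2
    omega
  have hidx : ∀ a : Fin k, l.idxOf a < k := by
    intro a
    have := List.idxOf_lt_length_iff.2 (hlmem a)
    omega
  set f : Fin k → Fin k := fun a => ⟨l.idxOf a, hidx a⟩ with hf
  have hinj : Function.Injective f := by
    intro a b hab
    have ha : l.idxOf a < l.length := by rw [hllen]; exact hidx a
    have hb : l.idxOf b < l.length := by rw [hllen]; exact hidx b
    have : l[l.idxOf a] = l[l.idxOf b] := by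
      congr 1
      exact congrArg Fin.val hab
    rwa [List.getElem_idxOf ha, List.getElem_idxOf hb] at this
  have hbij : Function.Bijective f := (Finite.injective_iff_bijective).1 hinj
  refine ⟨Equiv.ofBijective f hbij, ?_⟩
  apply List.ext_getElem
  · simp [hlen, hm]
  · intro i h1 h2
    simp only [List.getElem_map, List.getElem_take, List.getElem_finRange]
    have hi : i < x.length := by simpa using h1
    have hmem : x[i] ∈ x := List.getElem_mem _
    have hfx : l.idxOf x[i] = i := by
      rw [hl, List.idxOf_append_of_mem hmem]
      exact List.Nodup.idxOf_getElem hx i hi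
    show f x[i] = _
    apply Fin.ext
    simp only [hf]
    simp [hfx]
lemma gElem_congr {A : Type*} {l : List A} {i j : ℕ} (h : i = j) {hi : i < l.length} :
    l[i]'hi = l[j]'(h ▸ hi) := by subst h; rfl

/-- A word of length `d+1` whose first and last letters agree is a strong
Abelian `((d+1)/d)`-power. -/
lemma power_of_ends_eq {A : Type*} {x : List A} {d : ℕ} (hd : 1 ≤ d) (hlen : x.length = d + 1)
    (he : x[0]'(by omega) = x[d]'(by omega)) :
    IsStrongAPower (((d : ℚ) + 1) / (d : ℚ)) x := by
  rcases eq_or_lt_of_le hd with hd1 | hd2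
  · -- d = 1, square
    have hx2 : x = [x[0]'(by omega), x[0]'(by omega)] := by
      apply List.ext_getElem
      · simp [hlen]; omega
      · intro n h1 h2
        have : n < 2 := by simp at h2; omega
        interval_cases n
        · simp
        · simp only [List.getElem_cons_succ, List.getElem_cons_zero]
          rw [he]
          exact gElem_congr (by omega)
    have hγ : ((d : ℚ) + 1) / (d : ℚ) = 2 := by rw [← hd1]; norm_num
    rw [hγ]
    refine ⟨[x[0]'(by omega)], [[x[0]'(by omega)]], [], by simp, by norm_num, by simp, by simp,
      by simp, by simpa using hx2, by simp only [hlen, ← hd1, List.length_cons, List.length_nil]; norm_num⟩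
  · -- d ≥ 2
    have hdQ : (2:ℚ) ≤ (d:ℚ) := by exact_mod_cast hd2
    have hdpos : (0:ℚ) < (d:ℚ) := by linarith
    have hu'eq : x.drop d = [x[0]'(by omega)] := by
      apply List.ext_getElem
      · simp [hlen]
      · intro n h1 h2
        have hn : n = 0 := by simp [hlen] at h1; omega
        subst hn
        simp only [List.getElem_drop, List.getElem_cons_zero]
        exact (gElem_congr (by omega)).trans he.symm
    have hu₁take : (x.take d).take 1 = [x[0]'(by omega)] := by
      rw [List.take_take]
      apply List.ext_getElem
      · simp [hlen]; omega
      · intro n h1 h2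
        have hn : n = 0 := by simp [hlen] at h1; omega
        subst hn
        simp [List.getElem_take]
    refine ⟨x.take d, [], x.drop d, ?_, ?_, by simp, ?_, ?_, by simp, ?_⟩
    · intro h
      have := congrArg List.length h
      simp [hlen] at this
      omega
    · have hfl : ⌊((d : ℚ) + 1) / (d : ℚ)⌋ = 1 := by
        rw [Int.floor_eq_iff]
        constructor
        · rw [le_div_iff₀ hdpos]; push_cast; linarith
        · rw [div_lt_iff₀ hdpos]; push_cast; linarith
      rw [hfl]; norm_num
    · simp [hlen]; omega
    · have h1 : (x.drop d).length = 1 := by simp [hlen]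
      rw [h1, hu'eq, hu₁take]
    · have h2 : (x.take d).length = d := by simp [hlen]
      rw [hlen, h2]
      push_cast
      field_simp
/-- A word of length `m+2` with `x₀ = x_m` and `x₁ = x_{m+1}` is a strong
Abelian `((m+2)/m)`-power. -/
lemma power_two_overlap {A : Type*} {x : List A} {m : ℕ} (hm : 2 < m) (hlen : x.length = m + 2)
    (h0 : x[0]'(by omega) = x[m]'(by omega)) (h1 : x[1]'(by omega) = x[m+1]'(by omega)) :
    IsStrongAPower (((m : ℚ) + 2) / (m : ℚ)) x := by
  have hmQ : (3:ℚ) ≤ (m:ℚ) := by exact_mod_cast hm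
  have hmpos : (0:ℚ) < (m:ℚ) := by linarith
  have hu'eq : x.drop m = [x[0]'(by omega), x[1]'(by omega)] := by
    apply List.ext_getElem
    · simp [hlen]
    · intro n hn1 hn2
      have : n < 2 := by simp at hn2; omega
      interval_cases n
      · simp only [List.getElem_drop, List.getElem_cons_zero]
        exact (gElem_congr (by omega)).trans h0.symm
      · simp only [List.getElem_drop, List.getElem_cons_succ, List.getElem_cons_zero]
        exact (gElem_congr (by omega)).trans h1.symm
  have hu₁take : (x.take m).take 2 = [x[0]'(by omega), x[1]'(by omega)] := by
    rw [List.take_take]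
    apply List.ext_getElem
    · simp [hlen]; omega
    · intro n hn1 hn2
      have : n < 2 := by simp at hn2; omega
      interval_cases n <;> simp [List.getElem_take]
  refine ⟨x.take m, [], x.drop m, ?_, ?_, by simp, ?_, ?_, by simp, ?_⟩
  · intro h
    have := congrArg List.length h
    simp [hlen] at this
    omega
  · have hfl : ⌊((m : ℚ) + 2) / (m : ℚ)⌋ = 1 := by
      rw [Int.floor_eq_iff]
      constructor
      · rw [le_div_iff₀ hmpos]; push_cast; linarith
      · rw [div_lt_iff₀ hmpos]; push_cast; linarith
    rw [hfl]; norm_num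
  · simp [hlen]; omega
  · have h2 : (x.drop m).length = 2 := by simp [hlen]
    rw [h2, hu'eq, hu₁take]
  · have h2 : (x.take m).length = m := by simp [hlen]
    rw [hlen, h2]
    push_cast
    field_simp

lemma isFactor_take' {A : Type*} (w : List A) (n : ℕ) : IsFactor (w.take n) w :=
  ⟨[], w.drop n, by simp⟩

lemma isFactor_drop_take {A : Type*} (w : List A) (i n : ℕ) :
    IsFactor ((w.drop i).take n) w :=
  ⟨w.take i, (w.drop i).drop n, by
    rw [List.append_assoc, List.take_append_drop, List.take_append_drop]⟩

lemma exists_dup {A : Type*} {l : List A} (h : ¬ l.Nodup) :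
    ∃ (i j : ℕ) (hi : i < l.length) (hj : j < l.length), i < j ∧ l[i] = l[j] := by
  rw [List.nodup_iff_injective_get] at h
  rw [Function.not_injective_iff] at h
  obtain ⟨a, b, hab, hne⟩ := h
  rcases lt_or_gt_of_ne hne with hlt | hlt
  · exact ⟨a, b, a.isLt, b.isLt, hlt, by simpa [List.get_eq_getElem] using hab⟩
  · exact ⟨b, a, b.isLt, a.isLt, hlt, by simpa [List.get_eq_getElem] using hab.symm⟩

lemma repeat_far {k : ℕ} (hk : 6 ≤ k) {w : List (Fin k)}
    (hw : APlusFree (((k : ℚ) - 2) / ((k : ℚ) - 3)) w)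
    {i j : ℕ} (hij : i < j) (hj : j < w.length)
    (he : w[i]'(hij.trans hj) = w[j]'hj) : k - 3 ≤ j - i := by
  by_contra hcon
  push_neg at hcon
  obtain ⟨d, rfl⟩ : ∃ d, j = i + (d + 1) := ⟨j - i - 1, by omega⟩
  have hdk : d + 5 ≤ k := by omega
  have hK : ((d:ℚ) + 5) ≤ (k:ℚ) := by exact_mod_cast hdk
  have hxlen : ((w.drop i).take (d + 2)).length = (d + 1) + 1 := by simp; omega
  have hpow := power_of_ends_eq (x := (w.drop i).take (d+2)) (d := d+1) (by omega) hxlen ?he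
  · refine hw _ (isFactor_drop_take w i (d+2)) _ ?_ hpow
    push_cast
    rw [div_lt_div_iff₀ (by linarith) (by linarith)]
    nlinarith
  · simp only [List.getElem_take, List.getElem_drop]
    exact (gElem_congr (by omega)).trans he

lemma lenA {k : ℕ} (hk : 6 ≤ k) {w : List (Fin k)}
    (hw : APlusFree (((k : ℚ) - 2) / ((k : ℚ) - 3)) w)
    (hno : ∀ y, IsFactor y w → y.length = k - 2 → ¬ y.Nodup) : w.length ≤ k - 2 := by
  by_contra hlen
  push_neg at hlen
  have h0 : w[0]'(by omega) = w[k-3]'(by omega) := by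
    have hlen' : (w.take (k-2)).length = k - 2 := by simp; omega
    obtain ⟨i, j, hi, hj, hij, he⟩ := exists_dup (hno _ (isFactor_take' w (k-2)) hlen')
    simp only [List.getElem_take] at he
    have hj' : j < w.length := by simp at hj; omega
    have hfar := repeat_far hk hw hij hj' he
    obtain rfl : i = 0 := by simp at hj; omega
    obtain rfl : j = k - 3 := by simp at hj; omega
    exact he
  have h1 : w[1]'(by omega) = w[k-2]'(by omega) := by
    have hlen' : ((w.drop 1).take (k-2)).length = k - 2 := by simp; omega
    obtain ⟨i, j, hi, hj, hij, he⟩ := exists_dup (hno _ (isFactor_drop_take w 1 (k-2)) hlen')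
    simp only [List.getElem_take, List.getElem_drop] at he
    have hij' : 1 + i < 1 + j := by omega
    have hj' : 1 + j < w.length := by simp at hj; omega
    have hfar := repeat_far hk hw hij' hj' he
    obtain rfl : i = 0 := by simp at hj; omega
    obtain rfl : j = k - 3 := by simp at hj; omega
    exact (gElem_congr (by omega)).trans (he.trans (gElem_congr (by omega)))
  have hxlen : (w.take (k-1)).length = (k - 3) + 2 := by simp; omega
  have hpow := power_two_overlap (x := w.take (k-1)) (m := k - 3) (by omega) hxlen
      (by simp only [List.getElem_take]; exact h0)
      (by simp only [List.getElem_take]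
          exact h1.trans (gElem_congr (by omega)))
  refine hw _ (isFactor_take' w (k-1)) _ ?_ hpow
  have hc : ((k - 3 : ℕ) : ℚ) = (k:ℚ) - 3 := by
    rw [Nat.cast_sub (by omega)]; norm_num
  have hK : (6:ℚ) ≤ (k:ℚ) := by exact_mod_cast hk
  rw [hc, div_lt_div_iff₀ (by linarith) (by linarith)]
  nlinarith
lemma exists_first {A : Type*} (w : List A) (m : ℕ) (hm : 0 < m)
    (h : ∃ x, IsFactor x w ∧ x.length = m ∧ x.Nodup) :
    ∃ q x, m ≤ q ∧ q ≤ w.length ∧ x.length = m ∧ x.Nodup ∧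
      x <+: w.drop (q - m) ∧
      (∀ y, IsFactor y (w.take (q - 1)) → y.length = m → ¬ y.Nodup) := by
  classical
  have hQ : ∃ n, ∃ x : List A, IsFactor x (w.take n) ∧ x.length = m ∧ x.Nodup := by
    obtain ⟨x, hx, h2, h3⟩ := h
    exact ⟨w.length, x, by simpa using hx, h2, h3⟩
  obtain ⟨x, hxf, hxlen, hxnd⟩ := Nat.find_spec hQ
  set q := Nat.find hQ with hq
  have hqle : q ≤ w.length := Nat.find_min' hQ (by
    obtain ⟨x', hx', h2, h3⟩ := h
    exact ⟨x', by simpa using hx', h2, h3⟩)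
  have htlen : (w.take q).length = q := by simp; omega
  have hmq : m ≤ q := by
    have := hxf.length_le
    omega
  have hmin : ∀ y, IsFactor y (w.take (q - 1)) → y.length = m → ¬ y.Nodup := by
    intro y hy hylen hynd
    exact Nat.find_min hQ (m := q - 1) (by omega) ⟨y, hy, hylen, hynd⟩
  obtain ⟨p, s, hps⟩ := hxf
  have hs : s = [] := by
    by_contra hs
    have hlens : 1 ≤ s.length := by
      cases s with
      | nil => exact absurd rfl hs
      | cons a t => simp
    have hsum : p.length + x.length + s.length = q := by
      have := congrArg List.length hps
      simp at this
      omega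
    have hpx : (p ++ x) <+: w.take q := ⟨s, by rw [hps, List.append_assoc]⟩
    have hpxw : (p ++ x) <+: w := hpx.trans (List.take_prefix q w)
    have hpx1 : (p ++ x) <+: w.take (q - 1) := by
      rw [List.prefix_take_iff]
      refine ⟨hpxw, by simp; omega⟩
    obtain ⟨t, ht⟩ := hpx1
    exact hmin x ⟨p, t, by rw [← ht, List.append_assoc]⟩ hxlen hxnd
  subst hs
  have hps' : w.take q = p ++ x := by simpa using hps
  have hplen : p.length = q - m := by
    have := congrArg List.length hps'
    simp at this
    omega
  refine ⟨q, x, hmq, hqle, hxlen, hxnd, ⟨w.drop q, ?_⟩, hmin⟩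
  have hw' : w = p ++ (x ++ w.drop q) := by
    conv_lhs => rw [← List.take_append_drop q w]
    rw [hps', List.append_assoc]
  nth_rewrite 2 [hw']
  rw [List.drop_left' hplen]

lemma step_lemma {k : ℕ} {β : ℚ} (m r : ℕ) (hm : 0 < m) (hmk : m ≤ k) {B ℓ : ℕ}
    (hprev : ∀ v : List (Fin k), APlusFree β v →
      (∀ y, IsFactor y v → y.length = m → ¬ y.Nodup) → v.length ≤ B)
    (hmax : ∀ v : List (Fin k), APlusFree β v → ((List.finRange k).take m <+: v) →
      (∀ y, IsFactor y v → y.length = r → ¬ y.Nodup) → v.length ≤ ℓ)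
    (w : List (Fin k)) (hw : APlusFree β w)
    (hnor : ∀ y, IsFactor y w → y.length = r → ¬ y.Nodup) :
    w.length ≤ B ∨ w.length + m ≤ B + 1 + ℓ := by
  by_cases hno : ∀ y, IsFactor y w → y.length = m → ¬ y.Nodup
  · left; exact hprev w hw hno
  · right
    push_neg at hno
    obtain ⟨x0, hx0f, hx0len, hx0nd⟩ := hno
    obtain ⟨q, x, hmq, hqle, hxlen, hxnd, hpre, hmin⟩ :=
      exists_first w m hm ⟨x0, hx0f, hx0len, hx0nd⟩
    have hq1 : q - 1 ≤ B := by
      have := hprev (w.take (q-1)) (hw.factor (isFactor_take w (q-1))) hmin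
      simp at this
      omega
    obtain ⟨σ, hσ⟩ := exists_perm_map_eq hmk x hxnd hxlen
    have hvfree : APlusFree β ((w.drop (q - m)).map σ) :=
      (hw.factor (isFactor_drop w (q-m))).map_equiv σ
    have hvpre : (List.finRange k).take m <+: (w.drop (q - m)).map σ := by
      rw [← hσ]
      exact hpre.map σ
    have hvno : ∀ y, IsFactor y ((w.drop (q - m)).map σ) → y.length = r → ¬ y.Nodup := by
      intro y hy hylen hynd
      have hy' : IsFactor (y.map σ.symm) (w.drop (q-m)) := by
        have := hy.map σ.symm
        simpa using this
      exact hnor _ (hy'.trans (isFactor_drop w (q-m))) (by simpa using hylen)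
        (hynd.map σ.symm.injective)
    have hvlen : ((w.drop (q - m)).map σ).length ≤ ℓ := hmax _ hvfree hvpre hvno
    simp at hvlen
    omega

theorem statement_2 (k : ℕ) (hk : 6 ≤ k) (ℓ₁ ℓ₂ ℓ₃ : ℕ)
    (h₁ : IsGreatest (List.length ''
      {w : List (Fin k) | APlusFree (((k : ℚ) - 2) / ((k : ℚ) - 3)) w ∧
        (List.finRange k).take (k - 2) <+: w ∧
        ∀ x, IsFactor x w → x.length = k - 1 → ¬ x.Nodup}) ℓ₁)
    (h₂ : IsGreatest (List.length ''
      {w : List (Fin k) | APlusFree (((k : ℚ) - 2) / ((k : ℚ) - 3)) w ∧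
        (List.finRange k).take (k - 1) <+: w ∧
        ∀ x, IsFactor x w → x.length = k → ¬ x.Nodup}) ℓ₂)
    (h₃ : IsGreatest (List.length ''
      {w : List (Fin k) | APlusFree (((k : ℚ) - 2) / ((k : ℚ) - 3)) w ∧
        List.finRange k <+: w}) ℓ₃)
    (w : List (Fin k)) (hw : APlusFree (((k : ℚ) - 2) / ((k : ℚ) - 3)) w) :
    (w.length : ℤ) ≤ (ℓ₁ : ℤ) + ℓ₂ + ℓ₃ + 4 - 2 * k := by
  obtain ⟨w₁, hw₁, hw₁len⟩ := h₁.1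
  obtain ⟨w₂, hw₂, hw₂len⟩ := h₂.1
  obtain ⟨w₃, hw₃, hw₃len⟩ := h₃.1
  have hl1 : k - 2 ≤ ℓ₁ := by
    have := hw₁.2.1.length_le
    simp at this
    omega
  have hl2 : k - 1 ≤ ℓ₂ := by
    have := hw₂.2.1.length_le
    simp at this
    omega
  have hl3 : k ≤ ℓ₃ := by
    have := hw₃.2.length_le
    simp at this
    omega
  have hub1 : ∀ v : List (Fin k), APlusFree (((k : ℚ) - 2) / ((k : ℚ) - 3)) v →
      (List.finRange k).take (k-2) <+: v →
      (∀ y, IsFactor y v → y.length = k-1 → ¬ y.Nodup) → v.length ≤ ℓ₁ :=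
    fun v hv hp hn => h₁.2 ⟨v, ⟨hv, hp, hn⟩, rfl⟩
  have hub2 : ∀ v : List (Fin k), APlusFree (((k : ℚ) - 2) / ((k : ℚ) - 3)) v →
      (List.finRange k).take (k-1) <+: v →
      (∀ y, IsFactor y v → y.length = k → ¬ y.Nodup) → v.length ≤ ℓ₂ :=
    fun v hv hp hn => h₂.2 ⟨v, ⟨hv, hp, hn⟩, rfl⟩
  have hub3 : ∀ v : List (Fin k), APlusFree (((k : ℚ) - 2) / ((k : ℚ) - 3)) v →
      (List.finRange k).take k <+: v →
      (∀ y, IsFactor y v → y.length = k + 1 → ¬ y.Nodup) → v.length ≤ ℓ₃ := by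
    intro v hv hp _
    refine h₃.2 ⟨v, ⟨hv, ?_⟩, rfl⟩
    rwa [List.take_of_length_le (by simp)] at hp
  have LB : ∀ v : List (Fin k), APlusFree (((k : ℚ) - 2) / ((k : ℚ) - 3)) v →
      (∀ y, IsFactor y v → y.length = k-1 → ¬ y.Nodup) → v.length ≤ ℓ₁ + 1 := by
    intro v hv hn
    have := step_lemma (k-2) (k-1) (by omega) (by omega)
      (fun v hv hn => lenA hk hv hn) hub1 v hv hn
    omega
  have LC : ∀ v : List (Fin k), APlusFree (((k : ℚ) - 2) / ((k : ℚ) - 3)) v →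
      (∀ y, IsFactor y v → y.length = k → ¬ y.Nodup) → v.length + k ≤ ℓ₁ + ℓ₂ + 3 := by
    intro v hv hn
    have := step_lemma (k-1) k (by omega) (by omega) LB hub2 v hv hn
    omega
  have hnor : ∀ y : List (Fin k), IsFactor y w → y.length = k + 1 → ¬ y.Nodup := by
    intro y _ hylen hynd
    have := hynd.length_le_card
    simp at this
    omega
  have LD := step_lemma k (k+1) (by omega) (le_refl k)
    (B := ℓ₁ + ℓ₂ + 3 - k)
    (fun v hv hn => by have := LC v hv hn; omega) hub3 w hw hnor
  omega
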